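/- Let I, J be ideals of B(H) with I ⊆ J(I:J), and let μ_I, μ_J be the locally convex topologies on B(H) generated by the seminorms x ↦ ‖x·k‖_I (k ∈ I) and x ↦ ‖x·k‖_J (k ∈ J) respectively, where ‖·‖_I, ‖·‖_J are complete symmetric norms. Then μ_I is coarser than μ_J: every net converging to 0 in μ_J converges to 0 in μ_I. -/

import Mathlib

open Filter Topology

section Abstract

variable {E : Type*} [NormedAddCommGroup E] [NormedSpace ℂ E]

/-- Type synonym carrying a custom norm. -/
def NWrap (S : Submodule ℂ E) (_N : E → ℝ) : Type _ := ↥S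

namespace NWrap

variable {S : Submodule ℂ E} {N : E → ℝ}

instance : AddCommGroup (NWrap S N) := inferInstanceAs (AddCommGroup ↥S)
instance : Module ℂ (NWrap S N) := inferInstanceAs (Module ℂ ↥S)

/-- The underlying element. -/
def val (a : NWrap S N) : E := Subtype.val a

theorem mem (a : NWrap S N) : a.val ∈ S := Subtype.prop a

/-- Constructor. -/
def mk (x : E) (h : x ∈ S) : NWrap S N := ⟨x, h⟩

theorem ext {a b : NWrap S N} (h : a.val = b.val) : a = b := Subtype.ext h

@[simp] theorem val_add (a b : NWrap S N) : (a + b).val = a.val + b.val := rfl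
@[simp] theorem val_sub (a b : NWrap S N) : (a - b).val = a.val - b.val := rfl
@[simp] theorem val_zero : (0 : NWrap S N).val = 0 := rfl
@[simp] theorem val_neg (a : NWrap S N) : (-a).val = -a.val := rfl
@[simp] theorem val_smul (c : ℂ) (a : NWrap S N) : (c • a).val = c • a.val := rfl
@[simp] theorem val_mk (x : E) (h : x ∈ S) : (mk (N := N) x h).val = x := rfl

end NWrap

/-- Closed-graph bound: a linear map between symmetrically normed complete subspaces that are
continuously embedded is bounded. -/
theorem quotBound (SI SJ : Submodule ℂ E) (NI NJ : E → ℝ) (CI CJ : ℝ)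
    (hNItri : ∀ x ∈ SI, ∀ y ∈ SI, NI (x + y) ≤ NI x + NI y)
    (hNIsmul : ∀ (c : ℂ), ∀ x ∈ SI, NI (c • x) = ‖c‖ * NI x)
    (hNIdom : ∀ x ∈ SI, ‖x‖ ≤ CI * NI x)
    (hNIcomp : ∀ f : ℕ → E, (∀ n, f n ∈ SI) →
      (∀ ε : ℝ, 0 < ε → ∃ N : ℕ, ∀ m n : ℕ, N ≤ m → N ≤ n → NI (f m - f n) < ε) →
      ∃ g ∈ SI, Tendsto (fun n => NI (f n - g)) atTop (𝓝 0))
    (hNJtri : ∀ x ∈ SJ, ∀ y ∈ SJ, NJ (x + y) ≤ NJ x + NJ y)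
    (hNJsmul : ∀ (c : ℂ), ∀ x ∈ SJ, NJ (c • x) = ‖c‖ * NJ x)
    (hNJdom : ∀ x ∈ SJ, ‖x‖ ≤ CJ * NJ x)
    (hNJcomp : ∀ f : ℕ → E, (∀ n, f n ∈ SJ) →
      (∀ ε : ℝ, 0 < ε → ∃ N : ℕ, ∀ m n : ℕ, N ≤ m → N ≤ n → NJ (f m - f n) < ε) →
      ∃ g ∈ SJ, Tendsto (fun n => NJ (f n - g)) atTop (𝓝 0))
    (f : E →ₗ[ℂ] E) (hfc : Continuous f) (hf : ∀ x ∈ SJ, f x ∈ SI) :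
    ∃ C : ℝ, 0 ≤ C ∧ ∀ a ∈ SJ, NI (f a) ≤ C * NJ a := by
  classical
  -- basic facts about NI, NJ
  have NI0 : NI 0 = 0 := by
    have := hNIsmul 0 0 SI.zero_mem; simpa using this
  have NIneg : ∀ x ∈ SI, NI (-x) = NI x := by
    intro x hx; have := hNIsmul (-1) x hx; simpa using this
  have NIdef : ∀ x ∈ SI, NI x = 0 → x = 0 := by
    intro x hx h0
    have := hNIdom x hx
    rw [h0, mul_zero] at this
    exact norm_le_zero_iff.mp this
  have NJ0 : NJ 0 = 0 := by
    have := hNJsmul 0 0 SJ.zero_mem; simpa using this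
  have NJneg : ∀ x ∈ SJ, NJ (-x) = NJ x := by
    intro x hx; have := hNJsmul (-1) x hx; simpa using this
  have NJdef : ∀ x ∈ SJ, NJ x = 0 → x = 0 := by
    intro x hx h0
    have := hNJdom x hx
    rw [h0, mul_zero] at this
    exact norm_le_zero_iff.mp this
  -- set up Banach space structures
  letI iG : NormedAddCommGroup (NWrap SI NI) :=
    AddGroupNorm.toNormedAddCommGroup
      { toFun := fun x => NI x.val
        map_zero' := NI0
        add_le' := fun x y => hNItri _ x.mem _ y.mem
        neg' := fun x => NIneg _ x.mem
        eq_zero_of_map_eq_zero' := fun x h => NWrap.ext (NIdef _ x.mem h) }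
  letI : NormedSpace ℂ (NWrap SI NI) :=
    { norm_smul_le := fun c x => le_of_eq (hNIsmul c _ x.mem) }
  letI jG : NormedAddCommGroup (NWrap SJ NJ) :=
    AddGroupNorm.toNormedAddCommGroup
      { toFun := fun x => NJ x.val
        map_zero' := NJ0
        add_le' := fun x y => hNJtri _ x.mem _ y.mem
        neg' := fun x => NJneg _ x.mem
        eq_zero_of_map_eq_zero' := fun x h => NWrap.ext (NJdef _ x.mem h) }
  letI : NormedSpace ℂ (NWrap SJ NJ) :=
    { norm_smul_le := fun c x => le_of_eq (hNJsmul c _ x.mem) }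
  have normI : ∀ x : NWrap SI NI, ‖x‖ = NI x.val := fun _ => rfl
  have normJ : ∀ x : NWrap SJ NJ, ‖x‖ = NJ x.val := fun _ => rfl
  letI : CompleteSpace (NWrap SI NI) := by
    apply Metric.complete_of_cauchySeq_tendsto
    intro u hu
    have hc : ∀ ε : ℝ, 0 < ε → ∃ N : ℕ, ∀ m n : ℕ, N ≤ m → N ≤ n →
        NI ((u m).val - (u n).val) < ε := by
      intro ε hε
      obtain ⟨N, hN⟩ := Metric.cauchySeq_iff.mp hu ε hε
      refine ⟨N, fun m n hm hn => ?_⟩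
      have := hN m hm n hn
      rwa [dist_eq_norm, normI, NWrap.val_sub] at this
    obtain ⟨g, hg, hgt⟩ := hNIcomp (fun n => (u n).val) (fun n => (u n).mem) hc
    refine ⟨NWrap.mk g hg, ?_⟩
    rw [tendsto_iff_norm_sub_tendsto_zero]
    simpa [normI] using hgt
  letI : CompleteSpace (NWrap SJ NJ) := by
    apply Metric.complete_of_cauchySeq_tendsto
    intro u hu
    have hc : ∀ ε : ℝ, 0 < ε → ∃ N : ℕ, ∀ m n : ℕ, N ≤ m → N ≤ n →
        NJ ((u m).val - (u n).val) < ε := by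
      intro ε hε
      obtain ⟨N, hN⟩ := Metric.cauchySeq_iff.mp hu ε hε
      refine ⟨N, fun m n hm hn => ?_⟩
      have := hN m hm n hn
      rwa [dist_eq_norm, normJ, NWrap.val_sub] at this
    obtain ⟨g, hg, hgt⟩ := hNJcomp (fun n => (u n).val) (fun n => (u n).mem) hc
    refine ⟨NWrap.mk g hg, ?_⟩
    rw [tendsto_iff_norm_sub_tendsto_zero]
    simpa [normJ] using hgt
  -- the induced linear map
  let g : NWrap SJ NJ →ₗ[ℂ] NWrap SI NI :=
    { toFun := fun a => NWrap.mk (f a.val) (hf _ a.mem)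
      map_add' := fun a b => NWrap.ext (by simp [map_add])
      map_smul' := fun c a => NWrap.ext (by simp [map_smul]) }
  have gval : ∀ a : NWrap SJ NJ, (g a).val = f a.val := fun _ => rfl
  -- embeddings into E are continuous
  have embI : ∀ (v : ℕ → NWrap SI NI) (a : NWrap SI NI), Tendsto v atTop (𝓝 a) →
      Tendsto (fun n => (v n).val) atTop (𝓝 a.val) := by
    intro v a hv
    rw [tendsto_iff_norm_sub_tendsto_zero] at hv ⊢
    have hb : ∀ n, ‖(v n).val - a.val‖ ≤ CI * NI ((v n).val - a.val) :=
      fun n => hNIdom _ (SI.sub_mem (v n).mem a.mem)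
    apply squeeze_zero (fun n => norm_nonneg _) hb
    have h2 : Tendsto (fun n => CI * ‖v n - a‖) atTop (𝓝 (CI * 0)) := hv.const_mul CI
    simpa [normI] using h2
  have embJ : ∀ (v : ℕ → NWrap SJ NJ) (a : NWrap SJ NJ), Tendsto v atTop (𝓝 a) →
      Tendsto (fun n => (v n).val) atTop (𝓝 a.val) := by
    intro v a hv
    rw [tendsto_iff_norm_sub_tendsto_zero] at hv ⊢
    have hb : ∀ n, ‖(v n).val - a.val‖ ≤ CJ * NJ ((v n).val - a.val) :=
      fun n => hNJdom _ (SJ.sub_mem (v n).mem a.mem)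
    apply squeeze_zero (fun n => norm_nonneg _) hb
    have h2 : Tendsto (fun n => CJ * ‖v n - a‖) atTop (𝓝 (CJ * 0)) := hv.const_mul CJ
    simpa [normJ] using h2
  have hgc : Continuous g := by
    apply g.continuous_of_seq_closed_graph
    intro u a b hu hgu
    have h1 : Tendsto (fun n => (u n).val) atTop (𝓝 a.val) := embJ u a hu
    have h2 : Tendsto (fun n => f (u n).val) atTop (𝓝 (f a.val)) := (hfc.tendsto _).comp h1
    have h3 : Tendsto (fun n => (g (u n)).val) atTop (𝓝 b.val) := embI (g ∘ u) b hgu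
    rw [show (fun n => (g (u n)).val) = fun n => f (u n).val from rfl] at h3
    exact NWrap.ext (tendsto_nhds_unique h3 h2)
  let G : NWrap SJ NJ →L[ℂ] NWrap SI NI := ⟨g, hgc⟩
  refine ⟨‖G‖, norm_nonneg _, fun a ha => ?_⟩
  have := G.le_opNorm (NWrap.mk a ha)
  exact this

end Abstract

section OpDom

variable {H : Type*} [NormedAddCommGroup H] [InnerProductSpace ℂ H] [CompleteSpace H]

/-- A symmetric norm on an ideal dominates the operator norm (up to a constant). -/
theorem opDom (I : Set (H →L[ℂ] H)) (NI : (H →L[ℂ] H) → ℝ)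
    (hNI0 : ∀ T ∈ I, 0 ≤ NI T) (hNIdef : ∀ T ∈ I, NI T = 0 → T = 0)
    (hNIsmul : ∀ (c : ℂ), ∀ T ∈ I, NI (c • T) = ‖c‖ * NI T)
    (hNIsym : ∀ A B : H →L[ℂ] H, ∀ X ∈ I, NI (A * X * B) ≤ ‖A‖ * NI X * ‖B‖)
    (hIr : ∀ A T : H →L[ℂ] H, T ∈ I → T * A ∈ I) :
    ∃ C : ℝ, 0 ≤ C ∧ ∀ X ∈ I, ‖X‖ ≤ C * NI X := by
  classical
  by_cases htriv : ∀ X ∈ I, X = (0 : H →L[ℂ] H)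
  · refine ⟨0, le_refl 0, fun X hX => ?_⟩
    rw [htriv X hX]; simp
  · push_neg at htriv
    obtain ⟨T₀, hT₀I, hT₀⟩ := htriv
    have hv : ∃ v : H, T₀ v ≠ 0 := by
      by_contra h
      push_neg at h
      exact hT₀ (ContinuousLinearMap.ext fun v => by simp [h v])
    obtain ⟨v, hv⟩ := hv
    set u : H := T₀ v with hu
    -- rank one operators
    set R : H → H → (H →L[ℂ] H) := fun a b => (innerSL ℂ a).smulRight b with hR
    have Rap : ∀ a b h : H, R a b h = (inner ℂ a h : ℂ) • b := fun a b h => rfl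
    have Rnorm : ∀ a b : H, ‖R a b‖ ≤ ‖a‖ * ‖b‖ := by
      intro a b
      refine ContinuousLinearMap.opNorm_le_bound _ (mul_nonneg (norm_nonneg _) (norm_nonneg _))
        (fun h => ?_)
      rw [Rap, norm_smul]
      calc ‖(inner ℂ a h : ℂ)‖ * ‖b‖ ≤ ‖a‖ * ‖h‖ * ‖b‖ :=
            mul_le_mul_of_nonneg_right (norm_inner_le_norm a h) (norm_nonneg b)
        _ = ‖a‖ * ‖b‖ * ‖h‖ := by ring
    set P : H →L[ℂ] H := T₀ * R u v with hPdef
    have hP : P ∈ I := hIr _ _ hT₀I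
    have hPapp : ∀ h : H, P h = (inner ℂ u h : ℂ) • u := by
      intro h
      show T₀ (R u v h) = _
      rw [Rap, map_smul, ← hu]
    have hPne : P ≠ 0 := by
      intro h0
      have h1 : P u = 0 := by rw [h0]; rfl
      rw [hPapp] at h1
      rcases smul_eq_zero.mp h1 with h2 | h2
      · exact (inner_self_ne_zero.mpr hv) h2
      · exact hv h2
    have hNP : 0 < NI P := by
      rcases (hNI0 P hP).eq_or_lt with h | h
      · exact absurd (hNIdef P hP h.symm) hPne
      · exact h
    refine ⟨‖u‖ ^ 2 / NI P, by positivity, fun X hX => ?_⟩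
    have hNX : 0 ≤ NI X := hNI0 X hX
    refine ContinuousLinearMap.opNorm_le_bound _ (by positivity) (fun b => ?_)
    -- the rank-one sandwich
    have hAXB : R (X b) u * X * R u b = ((‖X b‖ ^ 2 : ℝ) : ℂ) • P := by
      ext h
      show R (X b) u (X (R u b h)) = (((‖X b‖ ^ 2 : ℝ) : ℂ) • P) h
      rw [Rap u b h, map_smul, Rap (X b) u, inner_smul_right, inner_self_eq_norm_sq_to_K,
        ContinuousLinearMap.smul_apply, hPapp, smul_smul]
      congr 1
      rw [mul_comm]
      norm_cast
    have h1 : NI (((‖X b‖ ^ 2 : ℝ) : ℂ) • P) = ‖X b‖ ^ 2 * NI P := by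
      rw [hNIsmul _ P hP, Complex.norm_real, Real.norm_eq_abs, abs_of_nonneg (sq_nonneg _)]
    have h2 := hNIsym (R (X b) u) (R u b) X hX
    rw [hAXB, h1] at h2
    have h3 : ‖R (X b) u‖ * NI X * ‖R u b‖ ≤ (‖X b‖ * ‖u‖) * NI X * (‖u‖ * ‖b‖) := by
      have r1 := Rnorm (X b) u
      have r2 := Rnorm u b
      have n2 : (0:ℝ) ≤ ‖R u b‖ := norm_nonneg _
      exact mul_le_mul (mul_le_mul_of_nonneg_right r1 hNX) r2 n2
        (mul_nonneg (mul_nonneg (norm_nonneg _) (norm_nonneg _)) hNX)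
    have hcomb : ‖X b‖ ^ 2 * NI P ≤ ‖X b‖ * ‖u‖ * NI X * (‖u‖ * ‖b‖) := le_trans h2 h3
    rcases (norm_nonneg (X b)).eq_or_lt with hb0 | hbp
    · rw [← hb0]
      have : (0:ℝ) ≤ ‖u‖ ^ 2 / NI P * NI X * ‖b‖ := by positivity
      linarith
    · rw [div_mul_eq_mul_div, div_mul_eq_mul_div, le_div_iff₀ hNP]
      nlinarith [hcomb, hbp]

end OpDom

variable {H : Type*} [NormedAddCommGroup H] [InnerProductSpace ℂ H] [CompleteSpace H]

/-- The ideal quotient `(I:J) = {x | xJ ⊆ I} = {x | Jx ⊆ I}` (the two descriptions agree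
since ideals of `B(H)` are self-adjoint). -/
def idealQuot (I J : Set (H →L[ℂ] H)) : Set (H →L[ℂ] H) :=
  {x | (∀ j ∈ J, x * j ∈ I) ∧ ∀ j ∈ J, j * x ∈ I}

/-- The product of two ideals: the additive subgroup generated by pairwise products. -/
def idealProd (A B : Set (H →L[ℂ] H)) : Set (H →L[ℂ] H) :=
  ↑(AddSubgroup.closure {z : H →L[ℂ] H | ∃ a ∈ A, ∃ b ∈ B, z = a * b})

/-- If `I ⊆ J·(I:J)` for symmetrically-normed ideals `I`, `J` of `B(H)`, then the
left-multiplier topology `μ_I` (generated by the seminorms `x ↦ ‖x k‖_I`, `k ∈ I`) is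
coarser than `μ_J`: every net tending to `0` in `μ_J` tends to `0` in `μ_I`. -/
theorem stmt11 (I J : Set (H →L[ℂ] H)) (NI NJ : (H →L[ℂ] H) → ℝ)
    -- I and J are two-sided ideals
    (hI0 : (0 : H →L[ℂ] H) ∈ I) (hIadd : ∀ S T : H →L[ℂ] H, S ∈ I → T ∈ I → S + T ∈ I)
    (hIneg : ∀ T : H →L[ℂ] H, T ∈ I → -T ∈ I)
    (hIl : ∀ A T : H →L[ℂ] H, T ∈ I → A * T ∈ I)
    (hIr : ∀ A T : H →L[ℂ] H, T ∈ I → T * A ∈ I)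
    (hJ0 : (0 : H →L[ℂ] H) ∈ J) (hJadd : ∀ S T : H →L[ℂ] H, S ∈ J → T ∈ J → S + T ∈ J)
    (hJneg : ∀ T : H →L[ℂ] H, T ∈ J → -T ∈ J)
    (hJl : ∀ A T : H →L[ℂ] H, T ∈ J → A * T ∈ J)
    (hJr : ∀ A T : H →L[ℂ] H, T ∈ J → T * A ∈ J)
    -- NI is a complete symmetric norm on I
    (hNI0 : ∀ T ∈ I, 0 ≤ NI T) (hNIdef : ∀ T ∈ I, NI T = 0 → T = 0)
    (hNItri : ∀ S T : H →L[ℂ] H, S ∈ I → T ∈ I → NI (S + T) ≤ NI S + NI T)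
    (hNIsmul : ∀ (c : ℂ), ∀ T ∈ I, NI (c • T) = ‖c‖ * NI T)
    (hNIsym : ∀ A B : H →L[ℂ] H, ∀ X ∈ I, NI (A * X * B) ≤ ‖A‖ * NI X * ‖B‖)
    (hIcomp : ∀ f : ℕ → (H →L[ℂ] H), (∀ n, f n ∈ I) →
      (∀ ε : ℝ, 0 < ε → ∃ N : ℕ, ∀ m n : ℕ, N ≤ m → N ≤ n → NI (f m - f n) < ε) →
      ∃ g ∈ I, Tendsto (fun n => NI (f n - g)) atTop (𝓝 0))
    -- NJ is a complete symmetric norm on J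
    (hNJ0 : ∀ T ∈ J, 0 ≤ NJ T) (hNJdef : ∀ T ∈ J, NJ T = 0 → T = 0)
    (hNJtri : ∀ S T : H →L[ℂ] H, S ∈ J → T ∈ J → NJ (S + T) ≤ NJ S + NJ T)
    (hNJsmul : ∀ (c : ℂ), ∀ T ∈ J, NJ (c • T) = ‖c‖ * NJ T)
    (hNJsym : ∀ A B : H →L[ℂ] H, ∀ X ∈ J, NJ (A * X * B) ≤ ‖A‖ * NJ X * ‖B‖)
    (hJcomp : ∀ f : ℕ → (H →L[ℂ] H), (∀ n, f n ∈ J) →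
      (∀ ε : ℝ, 0 < ε → ∃ N : ℕ, ∀ m n : ℕ, N ≤ m → N ≤ n → NJ (f m - f n) < ε) →
      ∃ g ∈ J, Tendsto (fun n => NJ (f n - g)) atTop (𝓝 0))
    -- the factorization hypothesis I ⊆ J·(I:J)
    (hIJ : I ⊆ idealProd J (idealQuot I J)) :
    ∀ {ι : Type*} (l : Filter ι) (x : ι → H →L[ℂ] H),
      (∀ k ∈ J, Tendsto (fun i => NJ (x i * k)) l (𝓝 0)) →
      ∀ k ∈ I, Tendsto (fun i => NI (x i * k)) l (𝓝 0) := by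
  intro ι l x hx k hk
  classical
  have NI0 : NI 0 = 0 := by
    have := hNIsmul 0 0 hI0; simpa using this
  -- ideals as submodules
  let SI : Submodule ℂ (H →L[ℂ] H) :=
    { carrier := I
      add_mem' := fun ha hb => hIadd _ _ ha hb
      zero_mem' := hI0
      smul_mem' := fun c a ha => by
        have h : c • a = (c • (1 : H →L[ℂ] H)) * a := by rw [smul_mul_assoc, one_mul]
        rw [h]; exact hIl _ _ ha }
  let SJ : Submodule ℂ (H →L[ℂ] H) :=
    { carrier := J
      add_mem' := fun ha hb => hJadd _ _ ha hb
      zero_mem' := hJ0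
      smul_mem' := fun c a ha => by
        have h : c • a = (c • (1 : H →L[ℂ] H)) * a := by rw [smul_mul_assoc, one_mul]
        rw [h]; exact hJl _ _ ha }
  -- the closed-graph bound for right multiplication by an element of (I:J)
  have key : ∀ q ∈ idealQuot I J, ∃ C : ℝ, 0 ≤ C ∧ ∀ a ∈ J, NI (a * q) ≤ C * NJ a := by
    intro q hq
    obtain ⟨CI, _, hCI⟩ := opDom I NI hNI0 hNIdef hNIsmul hNIsym hIr
    obtain ⟨CJ, _, hCJ⟩ := opDom J NJ hNJ0 hNJdef hNJsmul hNJsym hJr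
    exact quotBound SI SJ NI NJ CI CJ
      (fun a ha b hb => hNItri a b ha hb) hNIsmul hCI hIcomp
      (fun a ha b hb => hNJtri a b ha hb) hNJsmul hCJ hJcomp
      { toFun := fun a => a * q
        map_add' := fun a b => add_mul a b q
        map_smul' := fun c a => smul_mul_assoc c a q }
      (continuous_id.mul continuous_const)
      (fun a ha => hq.2 a ha)
  -- induction over the additive closure
  have hmem : k ∈ AddSubgroup.closure
      {z : H →L[ℂ] H | ∃ a ∈ J, ∃ b ∈ idealQuot I J, z = a * b} := hIJ hk
  refine (AddSubgroup.closure_induction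
    (p := fun z _ => z ∈ I ∧ Tendsto (fun i => NI (x i * z)) l (𝓝 0))
    ?_ ?_ ?_ ?_ hmem).2
  · rintro z ⟨a, haJ, b, hbQ, rfl⟩
    have habI : a * b ∈ I := hbQ.2 a haJ
    obtain ⟨C, hC0, hC⟩ := key b hbQ
    refine ⟨habI, ?_⟩
    apply squeeze_zero (fun i => hNI0 _ (hIl (x i) _ habI))
      (g := fun i => C * NJ (x i * a))
      (fun i => by rw [← mul_assoc]; exact hC _ (hJl (x i) a haJ))
    have := (hx a haJ).const_mul C
    simpa using this
  · refine ⟨hI0, ?_⟩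
    simpa [NI0] using (tendsto_const_nhds : Tendsto (fun _ : ι => (0:ℝ)) l (𝓝 0))
  · rintro a b _ _ ⟨haI, ha⟩ ⟨hbI, hb⟩
    refine ⟨hIadd _ _ haI hbI, ?_⟩
    apply squeeze_zero (fun i => hNI0 _ (hIl (x i) _ (hIadd _ _ haI hbI)))
      (g := fun i => NI (x i * a) + NI (x i * b))
      (fun i => by rw [mul_add]; exact hNItri _ _ (hIl _ _ haI) (hIl _ _ hbI))
    simpa using ha.add hb
  · rintro a _ ⟨haI, ha⟩
    refine ⟨hIneg _ haI, ?_⟩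
    have heq : (fun i => NI (x i * -a)) = fun i => NI (x i * a) := by
      funext i
      rw [mul_neg]
      have := hNIsmul (-1) (x i * a) (hIl _ _ haI)
      simpa using this
    rw [heq]; exact ha
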